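/- Let f, g ∈ FinStoch(m, m+n) be stochastic matrices and suppose that for every i ∈ m, the columns f(·,i) and g(·,i) are of the form (1/2)·(ι∘d)(·,i) + (1/2)·(ȷ∘f₀)(·,i) resp. with ι, ȷ the Kleisli liftings of the coproduct injections m → m+n ← n and d the identity (Dirac) matrix on m. If the convex hulls of the columns of (1/2)(ȷ∘f₀) + (1/2)(ι∘d) and of (1/2)(ȷ∘g₀) + (1/2)(ι∘d) are equal in D(m+n), then f₀ = g₀. -/

import Mathlib

/-- Stochastic matrix predicate: columns are probability vectors. -/
def StochMat {m n : ℕ} (f : Fin n → Fin m → ℝ) : Prop :=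
  (∀ a i, 0 ≤ f a i) ∧ ∀ i, ∑ a, f a i = 1

/-- The `i`-th column of `(1/2)·(ι∘d) + (1/2)·(ȷ∘f₀)` in `D(m+n)`:
the first `m` coordinates carry the Dirac tag `(1/2)·δ_i`, the last `n`
coordinates carry `(1/2)·f₀(·,i)`. -/
noncomputable def tagCol {m n : ℕ} (f0 : Fin n → Fin m → ℝ) (i : Fin m) : Fin (m + n) → ℝ :=
  fun a => Fin.addCases
    (fun i' : Fin m => if i' = i then (1 : ℝ)/2 else 0)
    (fun b : Fin n => (1/2) * f0 b i) a

lemma tagCol_left {m n : ℕ} (f0 : Fin n → Fin m → ℝ) (i i' : Fin m) :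
    tagCol f0 i (Fin.castAdd n i') = if i' = i then (1 : ℝ)/2 else 0 := by
  simp [tagCol]

lemma tagCol_right {m n : ℕ} (f0 : Fin n → Fin m → ℝ) (i : Fin m) (b : Fin n) :
    tagCol f0 i (Fin.natAdd m b) = (1/2) * f0 b i := by
  simp [tagCol]

lemma tag_col_eq {m n : ℕ} (f0 g0 : Fin n → Fin m → ℝ) (i : Fin m)
    (hmem : tagCol f0 i ∈ convexHull ℝ (Set.range (tagCol g0))) :
    ∀ b, f0 b i = g0 b i := by
  rw [convexHull_range_eq_exists_affineCombination] at hmem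
  obtain ⟨s, w, hw0, hw1, hx⟩ := hmem
  rw [Finset.affineCombination_eq_linear_combination _ _ _ hw1] at hx
  have hpt : ∀ a, ∑ j ∈ s, w j * tagCol g0 j a = tagCol f0 i a := by
    intro a
    calc ∑ j ∈ s, w j * tagCol g0 j a
        = (∑ j ∈ s, w j • tagCol g0 j) a := by
          rw [Finset.sum_apply]; rfl
      _ = tagCol f0 i a := by rw [hx]
  have hi : (if i ∈ s then w i * (1/2 : ℝ) else 0) = 1/2 := by
    have h := hpt (Fin.castAdd n i)
    rw [tagCol_left] at h
    norm_num at h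
    have key : ∑ j ∈ s, w j * tagCol g0 j (Fin.castAdd n i)
        = (if i ∈ s then w i * (1/2 : ℝ) else 0) := by
      rw [← Finset.sum_ite_eq' s i (fun j => w j * (1/2 : ℝ))]
      apply Finset.sum_congr rfl
      intro j hj
      rw [tagCol_left]
      by_cases hh : i = j <;> simp [hh, eq_comm]
    rw [key] at h
    exact h
  have his : i ∈ s := by
    by_contra h
    simp [h] at hi
  have hwi : w i = 1 := by
    rw [if_pos his] at hi; linarith
  have hw0' : ∀ j ∈ s, j ≠ i → w j = 0 := by
    intro j hj hji
    have hsum : ∑ j ∈ s.erase i, w j = 0 := by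
      have := Finset.add_sum_erase s w his
      rw [hw1, hwi] at this
      linarith
    have : ∀ j ∈ s.erase i, w j = 0 := by
      intro k hk
      exact (Finset.sum_eq_zero_iff_of_nonneg
        (fun k hk => hw0 k (Finset.mem_of_mem_erase hk))).mp hsum k hk
    exact this j (Finset.mem_erase.mpr ⟨hji, hj⟩)
  intro b
  have := hpt (Fin.natAdd m b)
  rw [tagCol_right] at this
  have hsum : ∑ j ∈ s, w j * tagCol g0 j (Fin.natAdd m b) = w i * ((1/2) * g0 b i) := by
    rw [← Finset.add_sum_erase s _ his]
    rw [tagCol_right]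
    have : ∑ j ∈ s.erase i, w j * tagCol g0 j (Fin.natAdd m b) = 0 := by
      apply Finset.sum_eq_zero
      intro j hj
      rw [hw0' j (Finset.mem_of_mem_erase hj) (Finset.ne_of_mem_erase hj), zero_mul]
    rw [this, add_zero]
  rw [hsum, hwi, one_mul] at this
  linarith

/-- Key lemma of the maximality theorem: mixing with the Dirac tag makes the
convex hull of the columns determine the stochastic matrix. -/
theorem tag_hull_injective {m n : ℕ} (f0 g0 : Fin n → Fin m → ℝ)
    (hf0 : StochMat f0) (hg0 : StochMat g0)
    (hhull : convexHull ℝ (Set.range (tagCol f0))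
        = convexHull ℝ (Set.range (tagCol g0))) :
    f0 = g0 := by
  funext b i
  apply tag_col_eq f0 g0 i _ b
  rw [← hhull]
  exact subset_convexHull ℝ _ ⟨i, rfl⟩
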